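/- Let a < b be reals, l = b − a, and let Φ₊, Φ₋ : ℝ → ℝ be measurable functions satisfying the reflection conditions Φ₊(b−t) = Φ₋(b+t) and Φ₊(a−t) = Φ₋(a+t) for a.e. t ∈ ℝ. Then Φ₊ and Φ₋ are uniquely determined (a.e.) on all of ℝ by their restrictions to (a,b); i.e., if two such pairs agree a.e. on (a,b), they agree a.e. on ℝ. -/

import Mathlib

open MeasureTheory Set

/-- a.e. translation transfer for `volume` on `ℝ`. -/
lemma ae_shift {p : ℝ → Prop} (c : ℝ) (h : ∀ᵐ x : ℝ, p x) : ∀ᵐ x : ℝ, p (x + c) :=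
  (measurePreserving_add_right volume c).quasiMeasurePreserving.ae h

/-- a.e. reflection transfer for `volume` on `ℝ`. -/
lemma ae_refl {p : ℝ → Prop} (c : ℝ) (h : ∀ᵐ x : ℝ, p x) : ∀ᵐ x : ℝ, p (c - x) :=
  (Measure.measurePreserving_sub_left volume c).quasiMeasurePreserving.ae h

/-- a.e. periodicity extends to all integer multiples of the period. -/
lemma ae_periodic_zsmul (f : ℝ → ℝ) (p : ℝ) (h : ∀ᵐ x : ℝ, f (x + p) = f x) (n : ℤ) :
    ∀ᵐ x : ℝ, f (x + p * n) = f x := by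
  induction n using Int.induction_on with
  | zero => simp
  | succ n ih =>
    have h' := ae_shift (p * n) h
    filter_upwards [h', ih] with x h1 h2
    have e : x + p * ((n : ℤ) + 1 : ℤ) = x + p * n + p := by push_cast; ring
    rw [e, h1]; exact_mod_cast h2
  | pred n ih =>
    have h' := ae_shift (p * (-(n : ℝ) - 1)) h
    filter_upwards [h', ih] with x h1 h2
    have e1 : x + p * ((-(n : ℤ) - 1 : ℤ) : ℝ) = x + p * (-(n : ℝ) - 1) := by push_cast; ring
    have e2 : x + p * (-(n : ℝ) - 1) + p = x + p * ((-(n : ℤ) : ℤ) : ℝ) := by push_cast; ring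
    rw [e1, ← h1, e2, h2]

/-- Clean form of a reflection condition. -/
lemma refl_clean (f g : ℝ → ℝ) (c : ℝ) (h : ∀ᵐ t : ℝ, f (c - t) = g (c + t)) :
    ∀ᵐ x : ℝ, g x = f (2*c - x) := by
  have h' := ae_shift (-c) h
  filter_upwards [h'] with x hx
  have e1 : c - (x + -c) = 2*c - x := by ring
  have e2 : c + (x + -c) = x := by ring
  rw [e1, e2] at hx
  exact hx.symm

/-- Two reflections give a.e. periodicity. -/
lemma ae_periodic_of_two_reflections (f g : ℝ → ℝ) (a b : ℝ)
    (hb : ∀ᵐ x : ℝ, g x = f (2*b - x)) (ha : ∀ᵐ x : ℝ, g x = f (2*a - x)) :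
    ∀ᵐ x : ℝ, f (x + 2*(b-a)) = f x := by
  have h1 := ae_refl (2*a) hb
  have h2 := ae_refl (2*a) ha
  filter_upwards [h1, h2] with x e1 e2
  have k1 : 2*b - (2*a - x) = x + 2*(b-a) := by ring
  have k2 : 2*a - (2*a - x) = x := by ring
  rw [k1] at e1
  rw [k2] at e2
  rw [← e1, ← e2]


theorem uniqueness_by_reflection (a b : ℝ) (hab : a < b)
    (Φp Φm Ψp Ψm : ℝ → ℝ)
    (hΦp : Measurable Φp) (hΦm : Measurable Φm)
    (hΨp : Measurable Ψp) (hΨm : Measurable Ψm)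
    (hreflΦ1 : ∀ᵐ t : ℝ, Φp (b - t) = Φm (b + t))
    (hreflΦ2 : ∀ᵐ t : ℝ, Φp (a - t) = Φm (a + t))
    (hreflΨ1 : ∀ᵐ t : ℝ, Ψp (b - t) = Ψm (b + t))
    (hreflΨ2 : ∀ᵐ t : ℝ, Ψp (a - t) = Ψm (a + t))
    (hagreep : ∀ᵐ x ∂(volume.restrict (Ioo a b)), Φp x = Ψp x)
    (hagreem : ∀ᵐ x ∂(volume.restrict (Ioo a b)), Φm x = Ψm x) :
    (∀ᵐ x : ℝ, Φp x = Ψp x) ∧ (∀ᵐ x : ℝ, Φm x = Ψm x) := by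
  have h2l : (0:ℝ) < 2*(b-a) := by linarith
  have hΦb := refl_clean Φp Φm b hreflΦ1
  have hΦa := refl_clean Φp Φm a hreflΦ2
  have hΨb := refl_clean Ψp Ψm b hreflΨ1
  have hΨa := refl_clean Ψp Ψm a hreflΨ2
  have perΦ := ae_periodic_of_two_reflections Φp Φm a b hΦb hΦa
  have perΨ := ae_periodic_of_two_reflections Ψp Ψm a b hΨb hΨa
  have keyΦ := ae_periodic_zsmul Φp (2*(b-a)) perΦ
  have keyΨ := ae_periodic_zsmul Ψp (2*(b-a)) perΨ
  have hA1 : ∀ᵐ x : ℝ, x ∈ Ioo a b → Φp x = Ψp x :=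
    (ae_restrict_iff' measurableSet_Ioo).mp hagreep
  have hA1m : ∀ᵐ x : ℝ, x ∈ Ioo a b → Φm x = Ψm x :=
    (ae_restrict_iff' measurableSet_Ioo).mp hagreem
  have hA2 : ∀ᵐ x : ℝ, x ∈ Ioo b (2*b - a) → Φp x = Ψp x := by
    have e1 := ae_refl (2*b) hΦb
    have e2 := ae_refl (2*b) hΨb
    have e3 := ae_refl (2*b) hA1m
    filter_upwards [e1, e2, e3] with x f1 f2 f3 hx
    have k : 2*b - (2*b - x) = x := by ring
    rw [k] at f1 f2
    have hx' : 2*b - x ∈ Ioo a b := ⟨by linarith [hx.2], by linarith [hx.1]⟩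
    rw [← f1, f3 hx', f2]
  -- combine, per integer shift
  have hall : ∀ᵐ x : ℝ, ∀ n : ℤ,
      ((x + 2*(b-a)*n ∈ Ioo a b → Φp (x + 2*(b-a)*n) = Ψp (x + 2*(b-a)*n)) ∧
       (x + 2*(b-a)*n ∈ Ioo b (2*b - a) → Φp (x + 2*(b-a)*n) = Ψp (x + 2*(b-a)*n))) ∧
      Φp (x + 2*(b-a)*n) = Φp x ∧ Ψp (x + 2*(b-a)*n) = Ψp x := by
    rw [MeasureTheory.ae_all_iff]
    intro n
    exact (ae_shift (2*(b-a)*(n:ℝ)) (hA1.and hA2)).and ((keyΦ n).and (keyΨ n))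
  -- the lattice of bad points is null
  set N : Set ℝ := ⋃ n : ℤ, ({a + 2*(b-a)*n, b + 2*(b-a)*n} : Set ℝ) with hNdef
  have hNc : N.Countable :=
    countable_iUnion fun n => ((finite_singleton _).insert _).countable
  have hN : ∀ᵐ x : ℝ, x ∉ N :=
    measure_eq_zero_iff_ae_notMem.mp (hNc.measure_zero _)
  have hP : ∀ᵐ x : ℝ, Φp x = Ψp x := by
    filter_upwards [hall, hN] with x hx hxN
    set n : ℤ := ⌊(x - a) / (2*(b-a))⌋ with hn
    obtain ⟨⟨g1, g2⟩, g3, g4⟩ := hx (-n)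
    set y : ℝ := x + 2*(b-a)*((-n : ℤ) : ℝ) with hy
    have hfl : (n:ℝ) ≤ (x - a)/(2*(b-a)) := Int.floor_le _
    have hfu : (x - a)/(2*(b-a)) < (n:ℝ) + 1 := Int.lt_floor_add_one _
    have hl1 : (n:ℝ) * (2*(b-a)) ≤ x - a := (le_div_iff₀ h2l).mp hfl
    have hl2 : x - a < ((n:ℝ) + 1) * (2*(b-a)) := (div_lt_iff₀ h2l).mp hfu
    have hye : y = x - (n:ℝ) * (2*(b-a)) := by rw [hy]; push_cast; ring
    have hyl : a ≤ y := by rw [hye]; linarith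
    have hyu : y < 2*b - a := by rw [hye]; nlinarith
    have hya : y ≠ a := by
      intro h
      apply hxN
      refine mem_iUnion.mpr ⟨n, ?_⟩
      simp only [mem_insert_iff, mem_singleton_iff]
      left
      rw [hye] at h
      linarith
    have hyb : y ≠ b := by
      intro h
      apply hxN
      refine mem_iUnion.mpr ⟨n, ?_⟩
      simp only [mem_insert_iff, mem_singleton_iff]
      right
      rw [hye] at h
      linarith
    rcases lt_or_gt_of_ne hyb with hlt | hgt
    · have hmem : y ∈ Ioo a b := ⟨lt_of_le_of_ne hyl (Ne.symm hya), hlt⟩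
      rw [← g3, ← g4]
      exact g1 hmem
    · have hmem : y ∈ Ioo b (2*b - a) := ⟨hgt, hyu⟩
      rw [← g3, ← g4]
      exact g2 hmem
  have hM : ∀ᵐ x : ℝ, Φm x = Ψm x := by
    have hP' := ae_refl (2*b) hP
    filter_upwards [hP', hΦb, hΨb] with x f0 f1 f2
    rw [f1, f2, f0]
  exact ⟨hP, hM⟩
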